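/- If triangles abc and a'b'c' are both anchored to the same unit vector u in a convex polygon P, then b = b' and c = c'. -/

import Mathlib

noncomputable section
open Set Real

/-- Points in the plane. -/
abbrev Pt : Type := ℝ × ℝ

/-- 2D wedge (cross) product. -/
def wedge (p q : Pt) : ℝ := p.1 * q.2 - p.2 * q.1

/-- Euclidean dot product on the plane. -/
def dotp (p q : Pt) : ℝ := p.1 * q.1 + p.2 * q.2

/-- Area of the triangle with vertices `a b c`. -/
def triArea (a b c : Pt) : ℝ := |wedge (b - a) (c - a)| / 2

/-- `abc` is inscribed in `P`, counter-clockwise, with `u` an outer normal to the side `bc`. -/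
def InscribedNormal (P : Set Pt) (u a b c : Pt) : Prop :=
  a ∈ P ∧ b ∈ P ∧ c ∈ P ∧ 0 ≤ wedge (b - a) (c - a) ∧
    dotp (c - b) u = 0 ∧ dotp a u ≤ dotp b u

/-- `abc` is anchored to `u` in `P`: it maximizes area among inscribed triangles
with `u` as outer normal to the side `bc`. -/
def Anchored (P : Set Pt) (u a b c : Pt) : Prop :=
  InscribedNormal P u a b c ∧
    ∀ a' b' c' : Pt, InscribedNormal P u a' b' c' → triArea a' b' c' ≤ triArea a b c



namespace St3

def Tc (u p : Pt) : ℝ := dotp p u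
def Xc (u p : Pt) : ℝ := p.2 * u.1 - p.1 * u.2

lemma coord_inj {u : Pt} (hu : u.1 ^ 2 + u.2 ^ 2 = 1) {p q : Pt}
    (h1 : Tc u p = Tc u q) (h2 : Xc u p = Xc u q) : p = q := by
  simp only [Tc, Xc, dotp] at h1 h2
  have e1 : p.1 = q.1 := by linear_combination u.1 * h1 - u.2 * h2 - (p.1 - q.1) * hu
  have e2 : p.2 = q.2 := by linear_combination u.2 * h1 + u.1 * h2 - (p.2 - q.2) * hu
  exact Prod.ext e1 e2

lemma Tc_sub (u p q : Pt) : dotp (p - q) u = Tc u p - Tc u q := by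
  simp only [Tc, dotp]; simp [Prod.fst_sub, Prod.snd_sub]; ring

lemma wedge_eq {u : Pt} (hu : u.1 ^ 2 + u.2 ^ 2 = 1) (a b c : Pt)
    (hcb : dotp (c - b) u = 0) :
    wedge (b - a) (c - a) = (Tc u b - Tc u a) * (Xc u c - Xc u b) := by
  have h1 : Tc u c = Tc u b := by
    have := Tc_sub u c b; linarith [hcb ▸ this]
  simp only [Tc, Xc, dotp, wedge] at h1 ⊢
  simp only [Prod.fst_sub, Prod.snd_sub]
  linear_combination -((b.1 - a.1) * (c.2 - a.2) - (b.2 - a.2) * (c.1 - a.1)) * hu +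
    (a.2 * u.1 - a.1 * u.2 - (b.2 * u.1 - b.1 * u.2)) * h1


lemma arith {t t' τ τ' x x' y y' : ℝ}
    (hTa : t ≤ t') (hh1 : 0 < τ - t) (hw1 : 0 < y - x)
    (hh1' : 0 < τ' - t') (hw1' : 0 < y' - x')
    (hAA : (τ' - t') * (y' - x') / 2 = (τ - t) * (y - x) / 2)
    (hleB : ((τ + τ') / 2 - t) * ((y + y') / 2 - (x + x') / 2) / 2 ≤
      (τ - t) * (y - x) / 2) :
    τ = τ' ∧ t = t' ∧ y - x = y' - x' := by
  have hq : 0 ≤ (t' - t) * ((y + y') - (x + x')) := mul_nonneg (by linarith) (by linarith)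
  have key1 : ((τ - t) + (τ' - t')) * ((y - x) + (y' - x')) ≤ 4 * ((τ - t) * (y - x)) := by
    nlinarith [hleB, hq]
  have heq : (τ - t) * (y' - x') + (τ' - t') * (y - x) ≤
      (τ - t) * (y - x) + (τ' - t') * (y' - x') := by nlinarith [key1, hAA]
  have hsign : 0 ≤ ((τ - t) - (τ' - t')) * ((y - x) - (y' - x')) := by nlinarith [heq]
  have hle_h : τ - t ≤ τ' - t' := by
    by_contra hcon
    push_neg at hcon
    have hwge : y' - x' ≤ y - x := by nlinarith [hsign, hcon]
    nlinarith [hAA, hcon, hwge, hw1', hh1']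
  have hge_h : τ' - t' ≤ τ - t := by
    by_contra hcon
    push_neg at hcon
    have hwge : y - x ≤ y' - x' := by nlinarith [hsign, hcon]
    nlinarith [hAA, hcon, hwge, hw1, hh1]
  have hhh : τ - t = τ' - t' := le_antisymm hle_h hge_h
  have hwww : y - x = y' - x' := by nlinarith [hAA, hh1, hhh]
  have e : ((τ + τ') / 2 - t) * ((y + y') / 2 - (x + x') / 2) =
      ((τ + τ') / 2 - t) * (y - x) := by
    linear_combination (-(((τ + τ') / 2 - t) / 2)) * hwww
  rw [e] at hleB
  have h2 : (τ + τ') / 2 - t ≤ τ - t :=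
    (mul_le_mul_iff_of_pos_right hw1).mp (by linarith)
  have hττ : τ = τ' := by linarith
  have htt : t = t' := by linarith
  exact ⟨hττ, htt, hwww⟩


lemma exists_pos (S : Finset Pt) (hS : ¬ Collinear ℝ (S : Set Pt))
    (P : Set Pt) (hP : P = convexHull ℝ (S : Set Pt))
    (u : Pt) (hu : u.1 ^ 2 + u.2 ^ 2 = 1) :
    ∃ a b c : Pt, InscribedNormal P u a b c ∧ 0 < triArea a b c := by
  have hne : S.Nonempty := by
    rcases S.eq_empty_or_nonempty with h | h
    · exfalso; apply hS; rw [h]; simp [collinear_empty]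
    · exact h
  obtain ⟨c0, hc0S, hc0max⟩ := S.exists_max_image (fun p => Tc u p) hne
  obtain ⟨a0, ha0S, ha0min⟩ := S.exists_min_image (fun p => Tc u p) hne
  have hmem : (S : Set Pt) ⊆ P := by rw [hP]; exact subset_convexHull ℝ _
  have hconv : Convex ℝ P := hP ▸ convex_convexHull ℝ _
  set m := Tc u a0 with hm
  set M := Tc u c0 with hM
  -- m < M
  have hmM : m < M := by
    rcases lt_or_ge m M with h | h
    · exact h
    · exfalso; apply hS
      have hall : ∀ p ∈ S, Tc u p = m := fun p hp =>
        le_antisymm (le_trans (hc0max p hp) h) (ha0min p hp)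
      rw [collinear_iff_of_mem (show a0 ∈ (S : Set Pt) from ha0S)]
      refine ⟨(-u.2, u.1), fun p hp => ⟨Xc u p - Xc u a0, ?_⟩⟩
      have hT : Tc u p = Tc u a0 := hall p hp
      simp only [Tc, Xc, dotp] at hT
      apply Prod.ext
      · show p.1 = (Xc u p - Xc u a0) * (-u.2) + a0.1
        simp only [Xc]
        linear_combination u.1 * hT - (p.1 - a0.1) * hu
      · show p.2 = (Xc u p - Xc u a0) * u.1 + a0.2
        simp only [Xc]
        linear_combination u.2 * hT - (p.2 - a0.2) * hu
  -- a point off the line a0 c0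
  have hs0 : ∃ s0 ∈ S, wedge (c0 - a0) (s0 - a0) ≠ 0 := by
    by_contra hcon
    push_neg at hcon
    apply hS
    rw [collinear_iff_of_mem (show a0 ∈ (S : Set Pt) from ha0S)]
    refine ⟨c0 - a0, fun p hp => ⟨dotp (p - a0) (c0 - a0) / dotp (c0 - a0) (c0 - a0), ?_⟩⟩
    have hw0 : wedge (c0 - a0) (p - a0) = 0 := hcon p hp
    have hd : dotp (c0 - a0) (c0 - a0) ≠ 0 := by
      intro hdd
      have hc0a0 : c0 = a0 := by
        simp only [dotp, Prod.fst_sub, Prod.snd_sub] at hdd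
        have h1 : c0.1 = a0.1 := by nlinarith [sq_nonneg (c0.1 - a0.1), sq_nonneg (c0.2 - a0.2)]
        have h2 : c0.2 = a0.2 := by nlinarith [sq_nonneg (c0.1 - a0.1), sq_nonneg (c0.2 - a0.2)]
        exact Prod.ext h1 h2
      have hMm : M = m := by rw [hM, hc0a0, hm]
      exact (ne_of_lt hmM) hMm.symm
    simp only [wedge, dotp, Prod.fst_sub, Prod.snd_sub] at hw0 hd ⊢
    apply Prod.ext
    · simp only [vadd_eq_add, Prod.fst_add, Prod.smul_fst, Prod.fst_sub, smul_eq_mul]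
      rw [div_mul_eq_mul_div, div_add' _ _ _ hd, eq_div_iff hd]
      linear_combination (-(c0.2 - a0.2)) * hw0
    · simp only [vadd_eq_add, Prod.snd_add, Prod.smul_snd, Prod.snd_sub, smul_eq_mul]
      rw [div_mul_eq_mul_div, div_add' _ _ _ hd, eq_div_iff hd]
      linear_combination (c0.1 - a0.1) * hw0
  obtain ⟨s0, hs0S, hW⟩ := hs0
  have hσM : Tc u s0 ≤ M := hc0max s0 hs0S
  have hmσ : m ≤ Tc u s0 := ha0min s0 hs0S
  have key : ∃ τ b1 c1, b1 ∈ P ∧ c1 ∈ P ∧ Tc u b1 = τ ∧ Tc u c1 = τ ∧ m < τ ∧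
      Xc u b1 ≠ Xc u c1 := by
    rcases eq_or_lt_of_le hσM with he | hlt
    · refine ⟨M, s0, c0, hmem hs0S, hmem hc0S, he, rfl, hmM, ?_⟩
      intro hx
      have hsc : s0 = c0 := coord_inj hu (by rw [he]) hx
      apply hW
      rw [hsc]
      simp only [wedge]
      ring
    · set σ := Tc u s0 with hσ
      set τ := (σ + M) / 2 with hτ
      set s1 := (τ - σ) / (M - σ) with hs1
      set s2 := (τ - m) / (M - m) with hs2
      set b1 : Pt := (s0.1 + s1 * (c0.1 - s0.1), s0.2 + s1 * (c0.2 - s0.2)) with hb1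
      set c1 : Pt := (a0.1 + s2 * (c0.1 - a0.1), a0.2 + s2 * (c0.2 - a0.2)) with hc1
      have hστ : σ < τ := by rw [hτ]; linarith
      have hτM : τ < M := by rw [hτ]; linarith
      have hs1a : 0 ≤ s1 := div_nonneg (by linarith) (by linarith)
      have hs1b : s1 < 1 := (div_lt_one (by linarith)).mpr (by linarith)
      have hs2a : 0 ≤ s2 := div_nonneg (by linarith) (by linarith)
      have hs2b : s2 ≤ 1 := (div_le_one (by linarith)).mpr (by linarith)
      have hb1P : b1 ∈ P := by
        have h := hconv (hmem hs0S) (hmem hc0S) (by linarith : (0:ℝ) ≤ 1 - s1) hs1a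
          (by ring : (1 - s1) + s1 = 1)
        convert h using 1
        apply Prod.ext <;>
          simp only [hb1, Prod.fst_add, Prod.snd_add, Prod.smul_fst, Prod.smul_snd,
            smul_eq_mul] <;> ring
      have hc1P : c1 ∈ P := by
        have h := hconv (hmem ha0S) (hmem hc0S) (by linarith : (0:ℝ) ≤ 1 - s2) hs2a
          (by ring : (1 - s2) + s2 = 1)
        convert h using 1
        apply Prod.ext <;>
          simp only [hc1, Prod.fst_add, Prod.snd_add, Prod.smul_fst, Prod.smul_snd,
            smul_eq_mul] <;> ring
      have hTb1 : Tc u b1 = τ := by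
        have e : Tc u b1 = σ + s1 * (M - σ) := by
          simp only [Tc, dotp, hb1, hσ, hM]; ring
        rw [e, hs1, div_mul_cancel₀ _ (ne_of_gt (by linarith : (0:ℝ) < M - σ))]
        ring
      have hTc1 : Tc u c1 = τ := by
        have e : Tc u c1 = m + s2 * (M - m) := by
          simp only [Tc, dotp, hc1, hm, hM]; ring
        rw [e, hs2, div_mul_cancel₀ _ (ne_of_gt (by linarith : (0:ℝ) < M - m))]
        ring
      refine ⟨τ, b1, c1, hb1P, hc1P, hTb1, hTc1, by linarith, ?_⟩
      have hwbc : wedge (c0 - a0) (b1 - c1) = (1 - s1) * wedge (c0 - a0) (s0 - a0) := by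
        simp only [wedge, hb1, hc1, Prod.fst_sub, Prod.snd_sub]
        ring
      intro hx
      have hbc : b1 = c1 := coord_inj hu (hTb1.trans hTc1.symm) hx
      rw [hbc] at hwbc
      have : (1 - s1) * wedge (c0 - a0) (s0 - a0) = 0 := by
        rw [← hwbc]
        simp only [wedge, Prod.fst_sub, Prod.snd_sub]
        ring
      rcases mul_eq_zero.mp this with h0 | h0
      · linarith
      · exact hW h0
  obtain ⟨τ, b1, c1, hb1P, hc1P, hTb1, hTc1, hmτ, hX⟩ := key
  rcases lt_or_gt_of_ne hX with hlt | hgt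
  · have hcb : dotp (c1 - b1) u = 0 := by rw [Tc_sub, hTb1, hTc1]; ring
    have hwe := wedge_eq hu a0 b1 c1 hcb
    rw [hTb1] at hwe
    refine ⟨a0, b1, c1, ⟨hmem ha0S, hb1P, hc1P, ?_, hcb, ?_⟩, ?_⟩
    · rw [hwe]; nlinarith
    · show Tc u a0 ≤ Tc u b1
      rw [hTb1]; exact le_of_lt hmτ
    · rw [triArea, hwe, abs_of_pos (by nlinarith)]
      nlinarith
  · have hcb : dotp (b1 - c1) u = 0 := by rw [Tc_sub, hTb1, hTc1]; ring
    have hwe := wedge_eq hu a0 c1 b1 hcb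
    rw [hTc1] at hwe
    refine ⟨a0, c1, b1, ⟨hmem ha0S, hc1P, hb1P, ?_, hcb, ?_⟩, ?_⟩
    · rw [hwe]; nlinarith
    · show Tc u a0 ≤ Tc u c1
      rw [hTc1]; exact le_of_lt hmτ
    · rw [triArea, hwe, abs_of_pos (by nlinarith)]
      nlinarith


lemma aux {P : Set Pt} (hconv : Convex ℝ P) {u : Pt} (hu : u.1 ^ 2 + u.2 ^ 2 = 1)
    {a b c a' b' c' : Pt} (h : Anchored P u a b c) (h' : Anchored P u a' b' c')
    (hApos : 0 < triArea a b c) (hTa : Tc u a ≤ Tc u a') : b = b' ∧ c = c' := by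
  obtain ⟨⟨haP, hbP, hcP, hwbc, hcb, hab⟩, hmax⟩ := h
  obtain ⟨⟨haP', hbP', hcP', hwbc', hcb', hab'⟩, hmax'⟩ := h'
  have hab2 : Tc u a ≤ Tc u b := hab
  have hab2' : Tc u a' ≤ Tc u b' := hab'
  have hTcb : Tc u c = Tc u b := by have := Tc_sub u c b; rw [hcb] at this; linarith
  have hTcb' : Tc u c' = Tc u b' := by have := Tc_sub u c' b'; rw [hcb'] at this; linarith
  have hE := wedge_eq hu a b c hcb
  have hE' := wedge_eq hu a' b' c' hcb'
  have hA : triArea a b c = (Tc u b - Tc u a) * (Xc u c - Xc u b) / 2 := by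
    rw [triArea, hE, abs_of_nonneg (hE ▸ hwbc)]
  have hA' : triArea a' b' c' = (Tc u b' - Tc u a') * (Xc u c' - Xc u b') / 2 := by
    rw [triArea, hE', abs_of_nonneg (hE' ▸ hwbc')]
  have hAA : triArea a' b' c' = triArea a b c :=
    le_antisymm (hmax a' b' c' ⟨haP', hbP', hcP', hwbc', hcb', hab'⟩)
      (hmax' a b c ⟨haP, hbP, hcP, hwbc, hcb, hab⟩)
  have hprod : 0 < (Tc u b - Tc u a) * (Xc u c - Xc u b) := by rw [hA] at hApos; linarith
  have hprod' : 0 < (Tc u b' - Tc u a') * (Xc u c' - Xc u b') := by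
    rw [← hAA, hA'] at hApos; linarith
  have hh1 : 0 < Tc u b - Tc u a := by
    rcases eq_or_lt_of_le hab2 with he | hlt
    · exfalso; rw [← he] at hprod; simp at hprod
    · linarith
  have hw1 : 0 < Xc u c - Xc u b := by nlinarith [hprod, hh1]
  have hh1' : 0 < Tc u b' - Tc u a' := by
    rcases eq_or_lt_of_le hab2' with he | hlt
    · exfalso; rw [← he] at hprod'; simp at hprod'
    · linarith
  have hw1' : 0 < Xc u c' - Xc u b' := by nlinarith [hprod', hh1']
  -- midpoint triangle
  set B : Pt := ((b.1 + b'.1) / 2, (b.2 + b'.2) / 2) with hB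
  set C : Pt := ((c.1 + c'.1) / 2, (c.2 + c'.2) / 2) with hC
  have hBP : B ∈ P := by
    have hh := hconv hbP hbP' (by norm_num : (0:ℝ) ≤ 1/2) (by norm_num : (0:ℝ) ≤ 1/2)
      (by norm_num : (1:ℝ)/2 + 1/2 = 1)
    convert hh using 1
    apply Prod.ext <;>
      simp only [hB, Prod.fst_add, Prod.snd_add, Prod.smul_fst, Prod.smul_snd,
        smul_eq_mul] <;> ring
  have hCP : C ∈ P := by
    have hh := hconv hcP hcP' (by norm_num : (0:ℝ) ≤ 1/2) (by norm_num : (0:ℝ) ≤ 1/2)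
      (by norm_num : (1:ℝ)/2 + 1/2 = 1)
    convert hh using 1
    apply Prod.ext <;>
      simp only [hC, Prod.fst_add, Prod.snd_add, Prod.smul_fst, Prod.smul_snd,
        smul_eq_mul] <;> ring
  have hTB : Tc u B = (Tc u b + Tc u b') / 2 := by simp only [Tc, dotp, hB]; ring
  have hTC : Tc u C = (Tc u c + Tc u c') / 2 := by simp only [Tc, dotp, hC]; ring
  have hXB : Xc u B = (Xc u b + Xc u b') / 2 := by simp only [Xc, hB]; ring
  have hXC : Xc u C = (Xc u c + Xc u c') / 2 := by simp only [Xc, hC]; ring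
  have hcbBC : dotp (C - B) u = 0 := by
    rw [Tc_sub, hTB, hTC, hTcb, hTcb']; ring
  have hEB := wedge_eq hu a B C hcbBC
  have hTaB : Tc u a ≤ Tc u B := by rw [hTB]; linarith
  have hwposB : 0 < (Tc u B - Tc u a) * (Xc u C - Xc u B) := by
    apply mul_pos
    · rw [hTB]; linarith
    · rw [hXB, hXC]; linarith
  have hInsB : InscribedNormal P u a B C :=
    ⟨haP, hBP, hCP, by rw [hEB]; linarith, hcbBC, hTaB⟩
  have hleB := hmax a B C hInsB
  have hAB : triArea a B C = (Tc u B - Tc u a) * (Xc u C - Xc u B) / 2 := by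
    rw [triArea, hEB, abs_of_nonneg (le_of_lt hwposB)]
  -- arithmetic: deduce equal heights/widths and equal apex level
  rw [hAB, hA, hTB, hXB, hXC] at hleB
  rw [hA', hA] at hAA
  obtain ⟨hττ, htt, hwww⟩ := arith hTa hh1 hw1 hh1' hw1' hAA hleB
  clear hleB hEB hInsB hwposB hTaB hcbBC hTB hTC hXB hXC hBP hCP hAB hAA
  clear hB hC B C
  set t := Tc u a
  set t' := Tc u a'
  set τ := Tc u b
  set τ' := Tc u b'
  set x := Xc u b
  set x' := Xc u b'
  set y := Xc u c
  set y' := Xc u c'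
  -- now compare x and x'
  rcases lt_trichotomy x x' with hx | hx | hx
  · exfalso
    have hcb2 : dotp (c' - b) u = 0 := by rw [Tc_sub, hTcb', ← hττ]; ring
    have hE2 := wedge_eq hu a b c' hcb2
    have hpos2 : 0 < (τ - t) * (y' - x) := by
      apply mul_pos hh1; linarith
    have hIns2 : InscribedNormal P u a b c' :=
      ⟨haP, hbP, hcP', by rw [hE2]; linarith, hcb2, hab⟩
    have := hmax a b c' hIns2
    rw [hA] at this
    have hA2 : triArea a b c' = (τ - t) * (y' - x) / 2 := by
      rw [triArea, hE2, abs_of_nonneg (le_of_lt hpos2)]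
    rw [hA2] at this
    have hlt2 : (τ - t) * (y - x) < (τ - t) * (y' - x) :=
      mul_lt_mul_of_pos_left (by linarith) hh1
    linarith
  · have hbb : b = b' := coord_inj hu hττ hx
    have hcc : c = c' := coord_inj hu (by rw [hTcb, hTcb', hττ]) (by linarith)
    exact ⟨hbb, hcc⟩
  · exfalso
    have hcb2 : dotp (c - b') u = 0 := by rw [Tc_sub, hTcb, hττ]; ring
    have hE2 := wedge_eq hu a' b' c hcb2
    have hpos2 : 0 < (τ' - t') * (y - x') := by
      apply mul_pos hh1'; linarith
    have hIns2 : InscribedNormal P u a' b' c :=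
      ⟨haP', hbP', hcP, by rw [hE2]; linarith, hcb2, hab'⟩
    have := hmax' a' b' c hIns2
    rw [hA'] at this
    have hA2 : triArea a' b' c = (τ' - t') * (y - x') / 2 := by
      rw [triArea, hE2, abs_of_nonneg (le_of_lt hpos2)]
    rw [hA2] at this
    have hlt2 : (τ' - t') * (y' - x') < (τ' - t') * (y - x') :=
      mul_lt_mul_of_pos_left (by linarith) hh1'
    linarith


end St3

/-- If triangles `abc` and `a'b'c'` are both anchored to the same unit
vector `u` in a convex polygon `P`, then `b = b'` and `c = c'`. -/
theorem stmt_3 (S : Finset Pt) (hS : ¬ Collinear ℝ (S : Set Pt))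
    (P : Set Pt) (hP : P = convexHull ℝ (S : Set Pt))
    (u : Pt) (hu : u.1 ^ 2 + u.2 ^ 2 = 1)
    (a b c a' b' c' : Pt) (h : Anchored P u a b c) (h' : Anchored P u a' b' c') :
    b = b' ∧ c = c' := by
  have hconv : Convex ℝ P := hP ▸ convex_convexHull ℝ _
  obtain ⟨a0, b0, c0, hins, hpos⟩ := St3.exists_pos S hS P hP u hu
  have hApos : 0 < triArea a b c := lt_of_lt_of_le hpos (h.2 a0 b0 c0 hins)
  have hApos' : 0 < triArea a' b' c' := lt_of_lt_of_le hpos (h'.2 a0 b0 c0 hins)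
  rcases le_total (St3.Tc u a) (St3.Tc u a') with hle | hle
  · exact St3.aux hconv hu h h' hApos hle
  · obtain ⟨h1, h2⟩ := St3.aux hconv hu h' h hApos' hle
    exact ⟨h1.symm, h2.symm⟩
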